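/- The group G_4^3 is isomorphic to the amalgamated free product A *_F B, where A = ⟨a,b,c | a² = b² = c² = 1⟩ is the free product of three copies of ℤ/2, F = F(x,y,z) is the free group of rank 3, and B = F ⋊ ℤ/2 is the semidirect product in which the nontrivial element d of ℤ/2 acts on F by the automorphism sending each of x, y, z to its inverse. Here the amalgamated product is the pushout (in the category of groups) of the homomorphism j_A : F → A defined by x ↦ abc, y ↦ bca, z ↦ cab and the inclusion j_B : F → B of the normal factor; the isomorphism sends the generators a, b, c of G_4^3 to the images of a, b, c ∈ A and the generator d of G_4^3 to the image of d ∈ ℤ/2 ⊂ B. -/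

import Mathlib

/-- The generators of the free group on four letters `a, b, c, d`. -/
def x : Fin 4 → FreeGroup (Fin 4) := FreeGroup.of

/-- The relators of the group `G_4^3`:
`a², b², c², d², (abcd)², (bcad)², (cabd)²`. -/
def rels43 : Set (FreeGroup (Fin 4)) :=
  {x 0 ^ 2, x 1 ^ 2, x 2 ^ 2, x 3 ^ 2,
    (x 0 * x 1 * x 2 * x 3) ^ 2, (x 1 * x 2 * x 0 * x 3) ^ 2, (x 2 * x 0 * x 1 * x 3) ^ 2}

/-- The group `G_4^3`. -/
abbrev G43 : Type := PresentedGroup rels43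

/-- The generator `a` of `G_4^3`. -/
def ga : G43 := PresentedGroup.of (rels := rels43) 0
/-- The generator `b` of `G_4^3`. -/
def gb : G43 := PresentedGroup.of (rels := rels43) 1
/-- The generator `c` of `G_4^3`. -/
def gc : G43 := PresentedGroup.of (rels := rels43) 2
/-- The generator `d` of `G_4^3`. -/
def gd : G43 := PresentedGroup.of (rels := rels43) 3

/-- The endomorphism of the free group `F(x,y,z)` inverting each generator. -/
def invEnd : FreeGroup (Fin 3) →* FreeGroup (Fin 3) :=
  FreeGroup.lift fun i => (FreeGroup.of i)⁻¹

lemma invEnd_invEnd (w : FreeGroup (Fin 3)) : invEnd (invEnd w) = w := by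
  have h : invEnd.comp invEnd = MonoidHom.id (FreeGroup (Fin 3)) := by
    apply FreeGroup.ext_hom
    intro a
    simp [invEnd]
  exact DFunLike.congr_fun h w

/-- The automorphism of the free group `F(x,y,z)` sending each of the generators
`x, y, z` to its inverse. -/
def invAut : MulAut (FreeGroup (Fin 3)) :=
  { toFun := invEnd
    invFun := invEnd
    left_inv := invEnd_invEnd
    right_inv := invEnd_invEnd
    map_mul' := invEnd.map_mul }

lemma zmod2_cases (g : Multiplicative (ZMod 2)) :
    g = 1 ∨ g = Multiplicative.ofAdd 1 := by
  revert g; decide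

/-- The action of `ℤ/2` on the free group `F(x,y,z)` in which the nontrivial element acts
by inverting each generator. -/
def act : Multiplicative (ZMod 2) →* MulAut (FreeGroup (Fin 3)) where
  toFun g := if g = 1 then 1 else invAut
  map_one' := if_pos rfl
  map_mul' g h := by
    have hsq : invAut * invAut = 1 := by
      ext w
      exact invEnd_invEnd w
    have h2 : (Multiplicative.ofAdd (1 : ZMod 2)) * Multiplicative.ofAdd 1 = 1 := by decide
    rcases zmod2_cases g with hg | hg <;> rcases zmod2_cases h with hh | hh <;>
      subst hg <;> subst hh <;> simp [hsq, h2]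

/-- The group `B = F(x,y,z) ⋊ ℤ/2`. -/
abbrev B : Type := FreeGroup (Fin 3) ⋊[act] Multiplicative (ZMod 2)

/-- The relators `a², b², c²` of the free product `A = ℤ/2 * ℤ/2 * ℤ/2`. -/
def relsA : Set (FreeGroup (Fin 3)) :=
  {FreeGroup.of 0 ^ 2, FreeGroup.of 1 ^ 2, FreeGroup.of 2 ^ 2}

/-- The group `A = ⟨a,b,c | a² = b² = c² = 1⟩`. -/
abbrev A : Type := PresentedGroup relsA

/-- The generator `a` of `A`. -/
def pa : A := PresentedGroup.of (rels := relsA) 0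
/-- The generator `b` of `A`. -/
def pb : A := PresentedGroup.of (rels := relsA) 1
/-- The generator `c` of `A`. -/
def pc : A := PresentedGroup.of (rels := relsA) 2

/-- The homomorphism `j_A : F(x,y,z) → A`, `x ↦ abc`, `y ↦ bca`, `z ↦ cab`. -/
def jA : FreeGroup (Fin 3) →* A :=
  FreeGroup.lift fun i => ![pa * pb * pc, pb * pc * pa, pc * pa * pb] i

/-- The inclusion `j_B : F(x,y,z) → B` of the normal factor of the semidirect product. -/
def jB : FreeGroup (Fin 3) →* B := SemidirectProduct.inl

/-- The two-element family of groups `A` (at `true`) and `B` (at `false`). -/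
abbrev Gfam : Bool → Type := fun b => bif b then A else B

instance (b : Bool) : Group (Gfam b) := by
  cases b <;> dsimp [Gfam] <;> infer_instance

/-- The family of homomorphisms out of `F(x,y,z)` along which the pushout is taken. -/
def φfam : ∀ b : Bool, FreeGroup (Fin 3) →* Gfam b
  | true => jA
  | false => jB


/-! ### Auxiliary material for the proof -/

/-- The quotient map onto `G43` as a hom. -/
def mk43 : FreeGroup (Fin 4) →* G43 := QuotientGroup.mk' _

lemma mk43_rel {r : FreeGroup (Fin 4)} (hr : r ∈ rels43) : mk43 r = 1 :=
  (QuotientGroup.eq_one_iff _).mpr (Subgroup.subset_normalClosure hr)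

lemma ga_def : ga = mk43 (x 0) := rfl
lemma gb_def : gb = mk43 (x 1) := rfl
lemma gc_def : gc = mk43 (x 2) := rfl
lemma gd_def : gd = mk43 (x 3) := rfl

lemma ga_sq : ga ^ 2 = 1 := by
  rw [ga_def, ← map_pow]; exact mk43_rel (by simp [rels43])
lemma gb_sq : gb ^ 2 = 1 := by
  rw [gb_def, ← map_pow]; exact mk43_rel (by simp [rels43])
lemma gc_sq : gc ^ 2 = 1 := by
  rw [gc_def, ← map_pow]; exact mk43_rel (by simp [rels43])
lemma gd_sq : gd ^ 2 = 1 := by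
  rw [gd_def, ← map_pow]; exact mk43_rel (by simp [rels43])

lemma gd_inv : gd⁻¹ = gd :=
  inv_eq_of_mul_eq_one_right (by rw [← pow_two]; exact gd_sq)

lemma rel_abcd : (ga * gb * gc * gd) ^ 2 = 1 := by
  rw [ga_def, gb_def, gc_def, gd_def, ← map_mul, ← map_mul, ← map_mul, ← map_pow]
  exact mk43_rel (by simp [rels43])
lemma rel_bcad : (gb * gc * ga * gd) ^ 2 = 1 := by
  rw [ga_def, gb_def, gc_def, gd_def, ← map_mul, ← map_mul, ← map_mul, ← map_pow]
  exact mk43_rel (by simp [rels43])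
lemma rel_cabd : (gc * ga * gb * gd) ^ 2 = 1 := by
  rw [ga_def, gb_def, gc_def, gd_def, ← map_mul, ← map_mul, ← map_mul, ← map_pow]
  exact mk43_rel (by simp [rels43])

lemma conj_of_rel {u : G43} (h : (u * gd) ^ 2 = 1) : gd * u * gd⁻¹ = u⁻¹ := by
  have h' : u * (gd * u * gd) = 1 := by
    rw [← h]; rw [pow_two]; group
  rw [gd_inv]
  have := eq_inv_of_mul_eq_one_right h'
  rw [← this]

lemma pa_sq : pa ^ 2 = 1 := by
  have : (QuotientGroup.mk' _ : FreeGroup (Fin 3) →* A) (FreeGroup.of 0 ^ 2) = 1 :=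
    (QuotientGroup.eq_one_iff _).mpr (Subgroup.subset_normalClosure (by simp [relsA]))
  rw [map_pow] at this; exact this
lemma pb_sq : pb ^ 2 = 1 := by
  have : (QuotientGroup.mk' _ : FreeGroup (Fin 3) →* A) (FreeGroup.of 1 ^ 2) = 1 :=
    (QuotientGroup.eq_one_iff _).mpr (Subgroup.subset_normalClosure (by simp [relsA]))
  rw [map_pow] at this; exact this
lemma pc_sq : pc ^ 2 = 1 := by
  have : (QuotientGroup.mk' _ : FreeGroup (Fin 3) →* A) (FreeGroup.of 2 ^ 2) = 1 :=
    (QuotientGroup.eq_one_iff _).mpr (Subgroup.subset_normalClosure (by simp [relsA]))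
  rw [map_pow] at this; exact this

/-- The hom `A →* G43`. -/
def toGA : A →* G43 :=
  PresentedGroup.toGroup (f := ![ga, gb, gc]) (by
    intro r hr
    rcases hr with h | h | h <;> subst h <;>
      simp [ga_sq, gb_sq, gc_sq])

lemma toGA_pa : toGA pa = ga := PresentedGroup.toGroup.of _
lemma toGA_pb : toGA pb = gb := PresentedGroup.toGroup.of _
lemma toGA_pc : toGA pc = gc := PresentedGroup.toGroup.of _

/-- The hom `F(x,y,z) →* G43`. -/
def fF : FreeGroup (Fin 3) →* G43 :=
  FreeGroup.lift fun i => ![ga * gb * gc, gb * gc * ga, gc * ga * gb] i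

/-- The hom `ℤ/2 →* G43` sending `d` to `gd`. -/
def fD : Multiplicative (ZMod 2) →* G43 where
  toFun g := if g = 1 then 1 else gd
  map_one' := if_pos rfl
  map_mul' g h := by
    have h2 : (Multiplicative.ofAdd (1 : ZMod 2)) * Multiplicative.ofAdd 1 = 1 := by decide
    rcases zmod2_cases g with hg | hg <;> rcases zmod2_cases h with hh | hh <;>
      subst hg <;> subst hh <;>
      simp [h2, ← pow_two, gd_sq]

lemma fD_d : fD (Multiplicative.ofAdd 1) = gd := by
  norm_num [fD]

lemma act_d_of (i : Fin 3) :
    act (Multiplicative.ofAdd 1) (FreeGroup.of i) = (FreeGroup.of i)⁻¹ := by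
  have : (Multiplicative.ofAdd (1 : ZMod 2)) ≠ 1 := by decide
  simp [act, this, invAut, invEnd]

lemma fF_of0 : fF (FreeGroup.of 0) = ga * gb * gc := by simp [fF]
lemma fF_of1 : fF (FreeGroup.of 1) = gb * gc * ga := by simp [fF]
lemma fF_of2 : fF (FreeGroup.of 2) = gc * ga * gb := by simp [fF]

lemma fF_compat :
    ∀ g, fF.comp (act g).toMonoidHom = (MulAut.conj (fD g)).toMonoidHom.comp fF := by
  intro g
  rcases zmod2_cases g with hg | hg <;> subst hg
  · ext i
    simp [fD]
  · apply FreeGroup.ext_hom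
    intro i
    simp only [MonoidHom.comp_apply, MulEquiv.coe_toMonoidHom, MulAut.conj_apply, fD_d]
    rw [act_d_of, map_inv]
    fin_cases i
    · show (fF (FreeGroup.of 0))⁻¹ = gd * fF (FreeGroup.of 0) * gd⁻¹
      rw [fF_of0, conj_of_rel rel_abcd]
    · show (fF (FreeGroup.of 1))⁻¹ = gd * fF (FreeGroup.of 1) * gd⁻¹
      rw [fF_of1, conj_of_rel rel_bcad]
    · show (fF (FreeGroup.of 2))⁻¹ = gd * fF (FreeGroup.of 2) * gd⁻¹
      rw [fF_of2, conj_of_rel rel_cabd]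

/-- The hom `B →* G43`. -/
def toGB : B →* G43 := SemidirectProduct.lift fF fD fF_compat

/-- The family of homs out of the pushout diagram. -/
def ffam : ∀ b : Bool, Gfam b →* G43
  | true => toGA
  | false => toGB

lemma ffam_compat : ∀ b : Bool, (ffam b).comp (φfam b) = fF := by
  intro b
  cases b
  · exact SemidirectProduct.lift_comp_inl fF fD fF_compat
  · apply FreeGroup.ext_hom
    intro i
    fin_cases i
    · show toGA (jA (FreeGroup.of 0)) = fF (FreeGroup.of 0)
      simp [jA, fF_of0, toGA_pa, toGA_pb, toGA_pc]
    · show toGA (jA (FreeGroup.of 1)) = fF (FreeGroup.of 1)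
      simp [jA, fF_of1, toGA_pa, toGA_pb, toGA_pc]
    · show toGA (jA (FreeGroup.of 2)) = fF (FreeGroup.of 2)
      simp [jA, fF_of2, toGA_pa, toGA_pb, toGA_pc]

/-- The hom from the pushout back to `G43`. -/
def back : Monoid.PushoutI φfam →* G43 := Monoid.PushoutI.lift ffam fF ffam_compat

/-- The images of the generators in the pushout. -/
def Pa : Monoid.PushoutI φfam := Monoid.PushoutI.of (φ := φfam) true pa
def Pb : Monoid.PushoutI φfam := Monoid.PushoutI.of (φ := φfam) true pb
def Pc : Monoid.PushoutI φfam := Monoid.PushoutI.of (φ := φfam) true pc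
def Pd : Monoid.PushoutI φfam :=
  Monoid.PushoutI.of (φ := φfam) false (SemidirectProduct.inr (Multiplicative.ofAdd 1))

lemma Pa_sq : Pa ^ 2 = 1 := by
  rw [Pa, ← map_pow, pa_sq, map_one]
lemma Pb_sq : Pb ^ 2 = 1 := by
  rw [Pb, ← map_pow, pb_sq, map_one]
lemma Pc_sq : Pc ^ 2 = 1 := by
  rw [Pc, ← map_pow, pc_sq, map_one]
lemma Pd_sq : Pd ^ 2 = 1 := by
  have h2 : (Multiplicative.ofAdd (1 : ZMod 2)) ^ 2 = 1 := by decide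
  have hB : (SemidirectProduct.inr (Multiplicative.ofAdd 1) : B) ^ 2 = 1 := by
    rw [← map_pow, h2, map_one]
  rw [Pd, ← map_pow, hB, map_one]

/-- Key relation in `B`. -/
lemma B_rel (i : Fin 3) :
    ((SemidirectProduct.inl (FreeGroup.of i) : B) *
      SemidirectProduct.inr (Multiplicative.ofAdd 1)) ^ 2 = 1 := by
  set d : Multiplicative (ZMod 2) := Multiplicative.ofAdd 1 with hd
  have hdd : d * d = 1 := by decide
  have key : (SemidirectProduct.inr d : B) * SemidirectProduct.inl (FreeGroup.of i) =
      SemidirectProduct.inl ((FreeGroup.of i)⁻¹) * SemidirectProduct.inr d := by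
    have h := SemidirectProduct.inl_aut (φ := act) d (FreeGroup.of i)
    rw [act_d_of] at h
    rw [h, mul_assoc, mul_assoc, ← map_mul, inv_mul_cancel, map_one, mul_one]
  rw [pow_two, mul_assoc, ← mul_assoc (SemidirectProduct.inr d), key]
  rw [← mul_assoc, ← mul_assoc, ← map_mul, mul_inv_cancel, map_one, one_mul, ← map_mul, hdd,
    map_one]

lemma of_base (i : Fin 3) :
    Monoid.PushoutI.of (φ := φfam) true (jA (FreeGroup.of i)) =
    Monoid.PushoutI.of (φ := φfam) false (SemidirectProduct.inl (FreeGroup.of i)) := by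
  rw [show jA (FreeGroup.of i) = φfam true (FreeGroup.of i) from rfl,
    Monoid.PushoutI.of_apply_eq_base,
    show (SemidirectProduct.inl (FreeGroup.of i) : B) = φfam false (FreeGroup.of i) from rfl,
    Monoid.PushoutI.of_apply_eq_base]

lemma PaPbPc : Pa * Pb * Pc =
    Monoid.PushoutI.of (φ := φfam) false (SemidirectProduct.inl (FreeGroup.of 0)) := by
  rw [← of_base]
  simp [jA, Pa, Pb, Pc]
lemma PbPcPa : Pb * Pc * Pa =
    Monoid.PushoutI.of (φ := φfam) false (SemidirectProduct.inl (FreeGroup.of 1)) := by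
  rw [← of_base]
  simp [jA, Pa, Pb, Pc]
lemma PcPaPb : Pc * Pa * Pb =
    Monoid.PushoutI.of (φ := φfam) false (SemidirectProduct.inl (FreeGroup.of 2)) := by
  rw [← of_base]
  simp [jA, Pa, Pb, Pc]

lemma Pabcd_sq : (Pa * Pb * Pc * Pd) ^ 2 = 1 := by
  rw [PaPbPc, Pd, ← map_mul, ← map_pow, B_rel, map_one]
lemma Pbcad_sq : (Pb * Pc * Pa * Pd) ^ 2 = 1 := by
  rw [PbPcPa, Pd, ← map_mul, ← map_pow, B_rel, map_one]
lemma Pcabd_sq : (Pc * Pa * Pb * Pd) ^ 2 = 1 := by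
  rw [PcPaPb, Pd, ← map_mul, ← map_pow, B_rel, map_one]

/-- The forward hom `G43 →* PushoutI φfam`. -/
def fwd : G43 →* Monoid.PushoutI φfam :=
  PresentedGroup.toGroup (f := ![Pa, Pb, Pc, Pd]) (by
    intro r hr
    rcases hr with h | h | h | h | h | h | h <;> subst h <;>
      simp [x, Pa_sq, Pb_sq, Pc_sq, Pd_sq, Pabcd_sq, Pbcad_sq, Pcabd_sq])

lemma fwd_ga : fwd ga = Pa := PresentedGroup.toGroup.of _
lemma fwd_gb : fwd gb = Pb := PresentedGroup.toGroup.of _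
lemma fwd_gc : fwd gc = Pc := PresentedGroup.toGroup.of _
lemma fwd_gd : fwd gd = Pd := PresentedGroup.toGroup.of _

lemma back_Pa : back Pa = ga := by
  rw [Pa, back, Monoid.PushoutI.lift_of]
  exact toGA_pa
lemma back_Pb : back Pb = gb := by
  rw [Pb, back, Monoid.PushoutI.lift_of]
  exact toGA_pb
lemma back_Pc : back Pc = gc := by
  rw [Pc, back, Monoid.PushoutI.lift_of]
  exact toGA_pc
lemma back_Pd : back Pd = gd := by
  rw [Pd, back, Monoid.PushoutI.lift_of]
  show toGB (SemidirectProduct.inr (Multiplicative.ofAdd 1)) = gd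
  rw [toGB, SemidirectProduct.lift_inr]
  exact fD_d

lemma back_fwd : back.comp fwd = MonoidHom.id G43 := by
  apply PresentedGroup.ext
  intro i
  fin_cases i
  · show back (fwd ga) = ga
    rw [fwd_ga, back_Pa]
  · show back (fwd gb) = gb
    rw [fwd_gb, back_Pb]
  · show back (fwd gc) = gc
    rw [fwd_gc, back_Pc]
  · show back (fwd gd) = gd
    rw [fwd_gd, back_Pd]

lemma fwd_back : fwd.comp back = MonoidHom.id (Monoid.PushoutI φfam) := by
  apply Monoid.PushoutI.hom_ext_nonempty
  intro i
  cases i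
  · -- i = false : B
    apply SemidirectProduct.hom_ext
    · apply FreeGroup.ext_hom
      intro j
      show fwd (back (Monoid.PushoutI.of (φ := φfam) false (SemidirectProduct.inl (FreeGroup.of j)))) =
        Monoid.PushoutI.of (φ := φfam) false (SemidirectProduct.inl (FreeGroup.of j))
      rw [back, Monoid.PushoutI.lift_of]
      show fwd (toGB (SemidirectProduct.inl (FreeGroup.of j))) = _
      rw [toGB, SemidirectProduct.lift_inl]
      fin_cases j
      · rw [show ((⟨0, by norm_num⟩ : Fin 3)) = (0 : Fin 3) from rfl, fF_of0, ← PaPbPc]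
        rw [map_mul, map_mul, fwd_ga, fwd_gb, fwd_gc]
      · rw [show ((⟨1, by norm_num⟩ : Fin 3)) = (1 : Fin 3) from rfl, fF_of1, ← PbPcPa]
        rw [map_mul, map_mul, fwd_gb, fwd_gc, fwd_ga]
      · rw [show ((⟨2, by norm_num⟩ : Fin 3)) = (2 : Fin 3) from rfl, fF_of2, ← PcPaPb]
        rw [map_mul, map_mul, fwd_gc, fwd_ga, fwd_gb]
    · apply MonoidHom.ext
      intro g
      rcases zmod2_cases g with hg | hg <;> subst hg
      · simp
      · show fwd (back (Monoid.PushoutI.of (φ := φfam) false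
            (SemidirectProduct.inr (Multiplicative.ofAdd 1)))) = _
        rw [← Pd, back_Pd, fwd_gd]; rfl
  · -- i = true : A
    apply PresentedGroup.ext
    intro j
    fin_cases j
    · show fwd (back (Monoid.PushoutI.of (φ := φfam) true pa)) = _
      rw [← Pa, back_Pa, fwd_ga]; rfl
    · show fwd (back (Monoid.PushoutI.of (φ := φfam) true pb)) = _
      rw [← Pb, back_Pb, fwd_gb]; rfl
    · show fwd (back (Monoid.PushoutI.of (φ := φfam) true pc)) = _
      rw [← Pc, back_Pc, fwd_gc]; rfl

/-- `G_4^3` is isomorphic to the amalgamated free product `A *_F B`, i.e. the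
pushout of `j_A : F(x,y,z) → A` and `j_B : F(x,y,z) → B`; the isomorphism sends the generators
`a, b, c` of `G_4^3` to the images of `a, b, c ∈ A` and the generator `d` of `G_4^3` to the
image of the nontrivial element `d ∈ ℤ/2 ⊂ B`. -/
theorem stmt_0 : ∃ e : G43 ≃* Monoid.PushoutI φfam,
    e ga = Monoid.PushoutI.of (φ := φfam) true pa ∧
    e gb = Monoid.PushoutI.of (φ := φfam) true pb ∧
    e gc = Monoid.PushoutI.of (φ := φfam) true pc ∧
    e gd = Monoid.PushoutI.of (φ := φfam) false (SemidirectProduct.inr (Multiplicative.ofAdd 1)) := by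
  refine ⟨MonoidHom.toMulEquiv fwd back back_fwd fwd_back, ?_, ?_, ?_, ?_⟩
  · exact fwd_ga
  · exact fwd_gb
  · exact fwd_gc
  · exact fwd_gd
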